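/- If a finite connected graph V can be partitioned into two nonempty sets V1 and V2, each inducing a connected subgraph of size at least m, then V admits a spanning tree containing an edge whose removal yields two trees each of size at least m. -/

import Mathlib

open SimpleGraph

/-- Reachability transfers along adjacency-wise reachability. -/
lemma aux_reach_of_adj_reach {V : Type*} {A B : SimpleGraph V}
    (h : ∀ x y, A.Adj x y → B.Reachable x y) :
    ∀ {x y : V}, A.Reachable x y → B.Reachable x y := by
  intro x y hr
  obtain ⟨p⟩ := hr
  induction p with
  | nil => exact Reachable.refl _
  | cons ha q ih => exact (h _ _ ha).trans ih

/-- Reachability preserves side-membership if adjacency does. -/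
lemma aux_side_of_reach {V : Type*} {A : SimpleGraph V} {S : Set V}
    (h : ∀ x y, A.Adj x y → (x ∈ S ↔ y ∈ S)) :
    ∀ {x y : V}, A.Reachable x y → (x ∈ S ↔ y ∈ S) := by
  intro x y hr
  obtain ⟨p⟩ := hr
  induction p with
  | nil => exact Iff.rfl
  | cons ha q ih => exact (h _ _ ha).trans ih

/-- A walk from inside a set to outside it contains a crossing edge. -/
lemma aux_cross {V : Type*} {G : SimpleGraph V} {S : Finset V} :
    ∀ {x y : V} (_ : G.Walk x y), x ∈ S → y ∉ S →
      ∃ a b, a ∈ S ∧ b ∉ S ∧ G.Adj a b := by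
  intro x y p
  induction p with
  | nil => intro hx hy; exact absurd hx hy
  | @cons x z y h q ih =>
    intro hx hy
    by_cases hz : z ∈ S
    · exact ih hz hy
    · exact ⟨x, z, hx, hz, h⟩

/-- The union of two acyclic graphs supported on disjoint sets is acyclic. -/
lemma aux_sup_acyclic {V : Type*} {A B : SimpleGraph V} {S1 S2 : Finset V}
    (hd : Disjoint S1 S2)
    (hA : ∀ x y, A.Adj x y → x ∈ S1 ∧ y ∈ S1)
    (hB : ∀ x y, B.Adj x y → x ∈ S2 ∧ y ∈ S2)
    (hAa : A.IsAcyclic) (hBa : B.IsAcyclic) : (A ⊔ B).IsAcyclic := by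
  have keyA : ∀ {x y : V} (p : (A ⊔ B).Walk x y), x ∈ S1 →
      ∀ e ∈ p.edges, e ∈ A.edgeSet := by
    intro x y p
    induction p with
    | nil => intro _ e he; simp at he
    | @cons x z y h q ih =>
      intro hx e he
      rw [SimpleGraph.Walk.edges_cons, List.mem_cons] at he
      rcases h with h | h
      · rcases he with rfl | he
        · exact h
        · exact ih (hA _ _ h).2 e he
      · exact absurd (hB _ _ h).1 (fun hh => Finset.disjoint_left.mp hd hx hh)
  have keyB : ∀ {x y : V} (p : (A ⊔ B).Walk x y), x ∈ S2 →
      ∀ e ∈ p.edges, e ∈ B.edgeSet := by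
    intro x y p
    induction p with
    | nil => intro _ e he; simp at he
    | @cons x z y h q ih =>
      intro hx e he
      rw [SimpleGraph.Walk.edges_cons, List.mem_cons] at he
      rcases h with h | h
      · exact absurd (hA _ _ h).1 (fun hh => Finset.disjoint_left.mp hd hh hx)
      · rcases he with rfl | he
        · exact h
        · exact ih (hB _ _ h).2 e he
  intro v c hc
  have hv : v ∈ S1 ∨ v ∈ S2 := by
    cases c with
    | nil => exact absurd rfl hc.ne_nil
    | cons h q =>
      rcases h with h | h
      · exact Or.inl (hA _ _ h).1
      · exact Or.inr (hB _ _ h).1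
  rcases hv with hv | hv
  · exact hAa (c.transfer A (keyA c hv)) (hc.transfer _)
  · exact hBa (c.transfer B (keyB c hv)) (hc.transfer _)

/-- A connected induced subgraph on a finset admits a spanning "tree" supported on the finset. -/
lemma aux_exists_tree {V : Type*} [Fintype V] (G : SimpleGraph V) (S : Finset V)
    (hS : (G.induce (S : Set V)).Connected) :
    ∃ T : SimpleGraph V, T ≤ G ∧ (∀ x y, T.Adj x y → x ∈ S ∧ y ∈ S) ∧ T.IsAcyclic ∧
      ∀ x ∈ S, ∀ y ∈ S, T.Reachable x y := by
  classical
  let G0 : SimpleGraph V :=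
    { Adj := fun x y => G.Adj x y ∧ x ∈ S ∧ y ∈ S
      symm := ⟨fun x y h => ⟨h.1.symm, h.2.2, h.2.1⟩⟩
      loopless := ⟨fun x h => G.loopless.irrefl x h.1⟩ }
  suffices H : ∀ n (T : SimpleGraph V), T.edgeSet.ncard = n → T ≤ G →
      (∀ x y, T.Adj x y → x ∈ S ∧ y ∈ S) → (∀ x ∈ S, ∀ y ∈ S, T.Reachable x y) →
      ∃ T' : SimpleGraph V, T' ≤ G ∧ (∀ x y, T'.Adj x y → x ∈ S ∧ y ∈ S) ∧ T'.IsAcyclic ∧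
        ∀ x ∈ S, ∀ y ∈ S, T'.Reachable x y by
    refine H _ G0 rfl (fun x y h => h.1) (fun x y h => h.2) ?_
    intro x hx y hy
    have hr := hS.preconnected ⟨x, by simpa using hx⟩ ⟨y, by simpa using hy⟩
    let f : (G.induce (S : Set V)) →g G0 :=
      ⟨Subtype.val, fun {p q} h => ⟨h, Finset.mem_coe.mp p.2, Finset.mem_coe.mp q.2⟩⟩
    exact hr.map f
  intro n
  induction n using Nat.strong_induction_on with
  | _ n ih =>
    intro T hcard hle hsupp hreach
    by_cases hac : T.IsAcyclic
    · exact ⟨T, hle, hsupp, hac, hreach⟩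
    · rw [isAcyclic_iff_forall_adj_isBridge] at hac
      push_neg at hac
      obtain ⟨u, v, huv, hnb⟩ := hac
      rw [isBridge_iff] at hnb
      push_neg at hnb
      have hre : (T \ SimpleGraph.fromEdgeSet {s(u, v)}).Reachable u v := hnb
      have hre' : (T.deleteEdges {s(u, v)}).Reachable u v := hre
      have hlt : (T.deleteEdges {s(u, v)}).edgeSet.ncard < n := by
        rw [SimpleGraph.edgeSet_deleteEdges, ← hcard]
        exact Set.ncard_diff_singleton_lt_of_mem huv (Set.toFinite _)
      have key : ∀ x y, T.Adj x y → (T.deleteEdges {s(u, v)}).Reachable x y := by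
        intro x y hxy
        by_cases h : s(x, y) = s(u, v)
        · rw [Sym2.eq_iff] at h
          rcases h with ⟨rfl, rfl⟩ | ⟨rfl, rfl⟩
          · exact hre'
          · exact hre'.symm
        · exact SimpleGraph.Adj.reachable (by
            rw [SimpleGraph.deleteEdges_adj]
            exact ⟨hxy, by simpa using h⟩)
      exact ih _ hlt _ rfl ((SimpleGraph.deleteEdges_le _).trans hle)
        (fun x y h => hsupp x y ((SimpleGraph.deleteEdges_le _) h))
        (fun x hx y hy => aux_reach_of_adj_reach key (hreach x hx y hy))

theorem stmt_0 {V : Type*} [Fintype V] [DecidableEq V] (G : SimpleGraph V) (hG : G.Connected)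
    (m : ℕ) (V1 V2 : Finset V)
    (h1 : V1.Nonempty) (h2 : V2.Nonempty)
    (hdisj : Disjoint V1 V2) (hunion : V1 ∪ V2 = Finset.univ)
    (hc1 : (G.induce (V1 : Set V)).Connected) (hc2 : (G.induce (V2 : Set V)).Connected)
    (hm1 : m ≤ V1.card) (hm2 : m ≤ V2.card) :
    ∃ T : SimpleGraph V, T ≤ G ∧ T.IsTree ∧
      ∃ u v : V, T.Adj u v ∧
        ¬ (T.deleteEdges {s(u, v)}).Reachable u v ∧
        m ≤ Nat.card {x : V // (T.deleteEdges {s(u, v)}).Reachable u x} ∧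
        m ≤ Nat.card {x : V // (T.deleteEdges {s(u, v)}).Reachable v x} := by
  classical
  have hmemor : ∀ x : V, x ∈ V1 ∨ x ∈ V2 := by
    intro x
    have : x ∈ V1 ∪ V2 := hunion ▸ Finset.mem_univ x
    exact Finset.mem_union.mp this
  have hnot12 : ∀ x : V, x ∈ V1 → x ∈ V2 → False := fun x h1 h2 =>
    Finset.disjoint_left.mp hdisj h1 h2
  -- crossing edge
  obtain ⟨x1, hx1⟩ := h1
  obtain ⟨x2, hx2⟩ := h2
  obtain ⟨p⟩ := hG.preconnected x1 x2
  obtain ⟨a, b, ha, hb', hab⟩ := aux_cross p hx1 (fun h => hnot12 x2 h hx2)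
  have hb : b ∈ V2 := (hmemor b).resolve_left hb'
  have haneb : a ≠ b := fun h => hb' (h ▸ ha)
  -- spanning trees of the parts
  obtain ⟨T1, hT1le, hT1supp, hT1ac, hT1reach⟩ := aux_exists_tree G V1 hc1
  obtain ⟨T2, hT2le, hT2supp, hT2ac, hT2reach⟩ := aux_exists_tree G V2 hc2
  -- the combined tree
  let T : SimpleGraph V :=
    { Adj := fun x y => T1.Adj x y ∨ T2.Adj x y ∨ (x = a ∧ y = b) ∨ (x = b ∧ y = a)
      symm := by
        refine ⟨fun x y h => ?_⟩
        rcases h with h | h | ⟨rfl, rfl⟩ | ⟨rfl, rfl⟩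
        · exact Or.inl h.symm
        · exact Or.inr (Or.inl h.symm)
        · exact Or.inr (Or.inr (Or.inr ⟨rfl, rfl⟩))
        · exact Or.inr (Or.inr (Or.inl ⟨rfl, rfl⟩))
      loopless := by
        refine ⟨fun x h => ?_⟩
        rcases h with h | h | ⟨rfl, rfl⟩ | ⟨rfl, rfl⟩
        · exact T1.loopless.irrefl x h
        · exact T2.loopless.irrefl x h
        · exact haneb rfl
        · exact haneb rfl }
  have hTadj : ∀ x y, T.Adj x y ↔
      (T1.Adj x y ∨ T2.Adj x y ∨ (x = a ∧ y = b) ∨ (x = b ∧ y = a)) := fun _ _ => Iff.rfl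
  have hT1leT : T1 ≤ T := fun x y h => Or.inl h
  have hT2leT : T2 ≤ T := fun x y h => Or.inr (Or.inl h)
  have hTab : T.Adj a b := Or.inr (Or.inr (Or.inl ⟨rfl, rfl⟩))
  have hTleG : T ≤ G := by
    intro x y h
    rcases h with h | h | ⟨rfl, rfl⟩ | ⟨rfl, rfl⟩
    · exact hT1le h
    · exact hT2le h
    · exact hab
    · exact hab.symm
  set D := T.deleteEdges {s(a, b)} with hD
  have hDadj : ∀ x y : V, D.Adj x y ↔ T.Adj x y ∧ s(x, y) ≠ s(a, b) := by
    intro x y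
    rw [hD, SimpleGraph.deleteEdges_adj]
    simp
  have hDside : ∀ x y : V, D.Adj x y → ((x ∈ (V1 : Set V)) ↔ (y ∈ (V1 : Set V))) := by
    intro x y h
    rw [hDadj] at h
    obtain ⟨hT, hne⟩ := h
    rcases hT with h | h | ⟨rfl, rfl⟩ | ⟨rfl, rfl⟩
    · obtain ⟨h1', h2'⟩ := hT1supp x y h
      simp [h1', h2']
    · obtain ⟨h1', h2'⟩ := hT2supp x y h
      constructor
      · intro hx; exact absurd (hnot12 x hx h1') id
      · intro hy; exact absurd (hnot12 y hy h2') id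
    · exact absurd rfl hne
    · exact absurd (Sym2.eq_swap) hne
  have hside : ∀ {x y : V}, D.Reachable x y → (x ∈ V1 ↔ y ∈ V1) := by
    intro x y h
    have := aux_side_of_reach (S := (V1 : Set V)) hDside h
    simpa using this
  have hnreach : ¬ D.Reachable a b := fun h => hnot12 b ((hside h).mp ha) hb
  have hT1leD : T1 ≤ D := by
    intro x y h
    rw [hDadj]
    refine ⟨hT1leT h, fun heq => ?_⟩
    rw [Sym2.eq_iff] at heq
    obtain ⟨hx', hy'⟩ := hT1supp x y h
    rcases heq with ⟨rfl, rfl⟩ | ⟨rfl, rfl⟩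
    · exact hnot12 y hy' hb
    · exact hnot12 x hx' hb
  have hT2leD : T2 ≤ D := by
    intro x y h
    rw [hDadj]
    refine ⟨hT2leT h, fun heq => ?_⟩
    rw [Sym2.eq_iff] at heq
    obtain ⟨hx', hy'⟩ := hT2supp x y h
    rcases heq with ⟨rfl, rfl⟩ | ⟨rfl, rfl⟩
    · exact hnot12 x ha hx'
    · exact hnot12 y ha hy'
  have hDleT : D ≤ T := SimpleGraph.deleteEdges_le _
  -- connectivity of T
  have hreachTa : ∀ x : V, T.Reachable x a := by
    intro x
    rcases hmemor x with hx | hx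
    · exact (hT1reach x hx a ha).mono hT1leT
    · exact ((hT2reach x hx b hb).mono hT2leT).trans hTab.symm.reachable
  have hTconn : T.Connected := by
    rw [SimpleGraph.connected_iff]
    exact ⟨fun x y => (hreachTa x).trans (hreachTa y).symm, ⟨a⟩⟩
  -- acyclicity of T
  have hsupac : (T1 ⊔ T2).IsAcyclic := aux_sup_acyclic hdisj hT1supp hT2supp hT1ac hT2ac
  have hTac : T.IsAcyclic := by
    intro v c hc
    by_cases he : s(a, b) ∈ c.edges
    · have := (SimpleGraph.adj_and_reachable_delete_edges_iff_exists_cycle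
        (G := T) (v := a) (w := b)).mpr ⟨v, c, hc, he⟩
      exact hnreach this.2
    · have hsub : ∀ e ∈ c.edges, e ∈ (T1 ⊔ T2).edgeSet := by
        refine Sym2.ind (fun x y hme => ?_)
        have hxy : T.Adj x y := c.adj_of_mem_edges hme
        rcases hxy with h | h | ⟨rfl, rfl⟩ | ⟨rfl, rfl⟩
        · exact Or.inl h
        · exact Or.inr h
        · exact absurd hme he
        · exact absurd (Sym2.eq_swap ▸ hme) he
      exact hsupac (c.transfer _ hsub) (hc.transfer _)
  -- cardinality of the two sides
  have hcard1 : m ≤ Nat.card {x : V // D.Reachable a x} := by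
    have hsub : (V1 : Set V) ⊆ {x : V | D.Reachable a x} := by
      intro x hx
      exact (hT1reach a ha x (by simpa using hx)).mono hT1leD
    have h' : (V1 : Set V).ncard ≤ ({x : V | D.Reachable a x}).ncard :=
      Set.ncard_le_ncard hsub (Set.toFinite _)
    rw [Set.ncard_coe_finset] at h'
    have h'' : Nat.card {x : V // D.Reachable a x} = ({x : V | D.Reachable a x}).ncard :=
      Nat.card_coe_set_eq _
    omega
  have hcard2 : m ≤ Nat.card {x : V // D.Reachable b x} := by
    have hsub : (V2 : Set V) ⊆ {x : V | D.Reachable b x} := by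
      intro x hx
      exact (hT2reach b hb x (by simpa using hx)).mono hT2leD
    have h' : (V2 : Set V).ncard ≤ ({x : V | D.Reachable b x}).ncard :=
      Set.ncard_le_ncard hsub (Set.toFinite _)
    rw [Set.ncard_coe_finset] at h'
    have h'' : Nat.card {x : V // D.Reachable b x} = ({x : V | D.Reachable b x}).ncard :=
      Nat.card_coe_set_eq _
    omega
  exact ⟨T, hTleG, ⟨hTconn, hTac⟩, a, b, hTab, hnreach, hcard1, hcard2⟩
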